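/- Every (T−1, ⌈(T+w−2)/2⌉)-SEC binary sequence (with blocks of length T−1) is a (T, w)-SWC sequence, provided w ≤ T and T ≥ 2: any window of T consecutive bits contains at least w ones. -/

import Mathlib

/-- Every (T−1, ⌈(T+w−2)/2⌉)-SEC binary sequence is a (T, w)-SWC sequence
(`(T + w - 1) / 2` is the natural-number expression for `⌈(T+w−2)/2⌉`). -/
theorem stmt_12 (m T w : ℕ) (hT : 2 ≤ T) (hw : 1 ≤ w) (hwT : w ≤ T)
    (b : ℕ → ℕ) (hbin : ∀ i, b i ≤ 1)
    (hSEC : ∀ j < m, (T + w - 1) / 2 ≤ ∑ t ∈ Finset.Icc 1 (T - 1), b (j * (T - 1) + t)) :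
    ∀ j, j + T ≤ m * (T - 1) → w ≤ ∑ t ∈ Finset.Icc 1 T, b (j + t) := by
  intro j hj
  obtain ⟨L, rfl⟩ : ∃ L, T = L + 1 := ⟨T - 1, by omega⟩
  have hL1 : 1 ≤ L := by omega
  simp only [Nat.add_sub_cancel] at hSEC hj
  obtain ⟨q, r, hrL, rfl⟩ : ∃ q r, r < L ∧ j = q * L + r :=
    ⟨j / L, j % L, Nat.mod_lt _ (by omega), by
      have h1 := Nat.div_add_mod j L
      have h2 : L * (j / L) = (j / L) * L := Nat.mul_comm _ _
      omega⟩
  have hq1m : q + 1 < m := by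
    have h1 : (q + 1) * L < m * L := by
      have h2 : (q + 1) * L = q * L + L := by ring
      omega
    exact lt_of_mul_lt_mul_right h1 (Nat.zero_le L)
  have hA := hSEC q (by omega)
  have hB := hSEC (q + 1) hq1m
  have hmul : (q + 1) * L = q * L + L := by ring
  rw [hmul] at hB
  obtain ⟨s, rfl⟩ : ∃ s, L = r + 1 + s := ⟨L - r - 1, by omega⟩
  rw [← Finset.Ico_add_one_right_eq_Icc, Finset.sum_Ico_eq_sum_range] at hA hB ⊢
  simp only [Nat.add_sub_cancel] at hA hB ⊢
  set a := q * (r + 1 + s) with ha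
  -- split the window: range (r+1+s+1) = range ((s+1) + (r+1))
  rw [show r + 1 + s + 1 = (s + 1) + (r + 1) from by omega, Finset.sum_range_add]
  -- split block q : range (r+1+s) = range (r + (s+1))
  have hsplitA : ∑ x ∈ Finset.range (r + 1 + s), b (a + (1 + x))
      = ∑ x ∈ Finset.range r, b (a + (1 + x))
        + ∑ x ∈ Finset.range (s + 1), b (a + (1 + (r + x))) := by
    rw [show r + 1 + s = r + (s + 1) from by omega, Finset.sum_range_add]
  rw [hsplitA] at hA
  -- split block q+1 : range (r+1+s) = range ((r+1) + s)
  rw [Finset.sum_range_add] at hB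
  have e1 : ∑ i ∈ Finset.range (s + 1), b (a + (1 + (r + i)))
      = ∑ i ∈ Finset.range (s + 1), b (a + r + (1 + i)) :=
    Finset.sum_congr rfl fun i _ => by congr 1; omega
  have e2 : ∑ i ∈ Finset.range (r + 1), b (a + r + (1 + (s + 1 + i)))
      = ∑ i ∈ Finset.range (r + 1), b (a + (r + 1 + s) + (1 + i)) :=
    Finset.sum_congr rfl fun i _ => by congr 1; omega
  have hA0 : ∑ i ∈ Finset.range r, b (a + (1 + i)) ≤ r := by
    calc ∑ i ∈ Finset.range r, b (a + (1 + i)) ≤ ∑ _i ∈ Finset.range r, 1 :=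
          Finset.sum_le_sum fun i _ => hbin _
      _ = r := by simp
  have hB1 : ∑ i ∈ Finset.range s, b (a + (r + 1 + s) + (1 + (r + 1 + i))) ≤ s := by
    calc ∑ i ∈ Finset.range s, b (a + (r + 1 + s) + (1 + (r + 1 + i)))
        ≤ ∑ _i ∈ Finset.range s, 1 := Finset.sum_le_sum fun i _ => hbin _
      _ = s := by simp
  have hv : w + s + r ≤ 2 * ((r + 1 + s + 1 + w - 1) / 2) := by omega
  rw [e1] at hA
  rw [e2]
  linarith [hA, hB, hA0, hB1, hv]
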